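/- Let a, b > 0 and define Q_{a,b}^{[2]}(x) := (1−x)^{b−1} + ((b−1)x/(a+1)) (1 − (a+1)x/(a+2))^{b−2} for x ∈ (0,1). Then for all x ∈ (0,1): if b ∈ (0,1] ∪ [2,3] then Q_{a,b}(x) ≤ Q_{a,b}^{[2]}(x), and if b ∈ [1,2] ∪ [3,∞) then Q_{a,b}(x) ≥ Q_{a,b}^{[2]}(x). -/

import Mathlib

open MeasureTheory

/-- The auxiliary function `Q_{a,b}(x) = a ∫₀¹ y^(a-1) (1-xy)^(b-1) dy`. -/
noncomputable def Q (a b x : ℝ) : ℝ :=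
  a * ∫ y in (0:ℝ)..1, y ^ (a - 1) * (1 - x * y) ^ (b - 1)

/-- Bernoulli for nonpositive exponents. -/
lemma bern_nonpos {p t : ℝ} (hp : p ≤ 0) (ht : 0 < t) : 1 + p * (t - 1) ≤ t ^ p := by
  rcases le_or_gt (1 + p * (t - 1)) 0 with h | h
  · exact h.trans (Real.rpow_pos_of_pos ht p).le
  · rw [Real.rpow_def_of_pos ht]
    calc 1 + p * (t - 1) = Real.exp (Real.log (1 + p * (t - 1))) := (Real.exp_log h).symm
      _ ≤ Real.exp (Real.log t * p) := by
          apply Real.exp_le_exp.mpr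
          have h1 : Real.log (1 + p * (t - 1)) ≤ p * (t - 1) := by
            have := Real.log_le_sub_one_of_pos h
            linarith
          have h2 : Real.log t ≤ t - 1 := Real.log_le_sub_one_of_pos ht
          nlinarith

/-- Tangent line inequality for rpow, convex case. -/
lemma tangent_le {p u v : ℝ} (hu : 0 < u) (hv : 0 < v) (hp : p ≤ 0 ∨ 1 ≤ p) :
    v ^ p + p * v ^ (p - 1) * (u - v) ≤ u ^ p := by
  have hvp : 0 < v ^ p := Real.rpow_pos_of_pos hv p
  have hdiv : (0:ℝ) < u / v := div_pos hu hv
  have hb : 1 + p * (u / v - 1) ≤ (u / v) ^ p := by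
    rcases hp with hp | hp
    · exact bern_nonpos hp hdiv
    · have := one_add_mul_self_le_rpow_one_add (s := u / v - 1) (by linarith) hp
      simpa using this
  have hdr : (u / v) ^ p = u ^ p / v ^ p := Real.div_rpow hu.le hv.le p
  rw [hdr] at hb
  have := mul_le_mul_of_nonneg_left hb hvp.le
  have hvp1 : v ^ (p - 1) = v ^ p / v := Real.rpow_sub_one hv.ne' p
  rw [hvp1]
  have hv' : v ≠ 0 := hv.ne'
  have e1 : v ^ p * (u ^ p / v ^ p) = u ^ p := by field_simp
  have e2 : v ^ p * (1 + p * (u / v - 1)) = v ^ p + p * (v ^ p / v) * (u - v) := by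
    field_simp
  rw [e1, e2] at this
  exact this

/-- Tangent line inequality for rpow, concave case. -/
lemma tangent_ge {p u v : ℝ} (hu : 0 < u) (hv : 0 < v) (hp0 : 0 ≤ p) (hp1 : p ≤ 1) :
    u ^ p ≤ v ^ p + p * v ^ (p - 1) * (u - v) := by
  have hvp : 0 < v ^ p := Real.rpow_pos_of_pos hv p
  have hdiv : (0:ℝ) < u / v := div_pos hu hv
  have hb : (u / v) ^ p ≤ 1 + p * (u / v - 1) := by
    have := rpow_one_add_le_one_add_mul_self (s := u / v - 1) (by linarith) hp0 hp1
    simpa using this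
  have hdr : (u / v) ^ p = u ^ p / v ^ p := Real.div_rpow hu.le hv.le p
  rw [hdr] at hb
  have := mul_le_mul_of_nonneg_left hb hvp.le
  have hvp1 : v ^ (p - 1) = v ^ p / v := Real.rpow_sub_one hv.ne' p
  rw [hvp1]
  have hv' : v ≠ 0 := hv.ne'
  have e1 : v ^ p * (u ^ p / v ^ p) = u ^ p := by field_simp
  have e2 : v ^ p * (1 + p * (u / v - 1)) = v ^ p + p * (v ^ p / v) * (u - v) := by
    field_simp
  rw [e1, e2] at this
  exact this

lemma contOn_rpow {c : ℝ} (hc : 0 < c) (s : Set ℝ) :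
    ContinuousOn (fun y : ℝ => y ^ c) s := fun y _ =>
  (Real.continuousAt_rpow_const y c (Or.inr hc.le)).continuousWithinAt

lemma contOn_base {x : ℝ} (hx1 : x < 1) (hx0 : 0 < x) (c : ℝ) :
    ContinuousOn (fun y : ℝ => (1 - x * y) ^ c) (Set.Icc 0 1) := by
  intro y hy
  have hpos : 0 < 1 - x * y := by
    have : x * y ≤ x * 1 := by nlinarith [hy.1, hy.2]
    nlinarith
  exact (((by fun_prop : ContinuousAt (fun y : ℝ => 1 - x * y) y).rpow_const
    (Or.inl hpos.ne'))).continuousWithinAt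

lemma integral_rpow_monomial {a : ℝ} (ha : 0 < a) (C D : ℝ) :
    ∫ y in (0:ℝ)..1, y ^ a * (C + D * y) = C / (a + 1) + D / (a + 2) := by
  have h1 : ∫ y in (0:ℝ)..1, y ^ a = 1 / (a + 1) := by
    rw [integral_rpow (Or.inl (by linarith))]
    rw [Real.one_rpow, Real.zero_rpow (by positivity)]
    norm_num
  have h2 : ∫ y in (0:ℝ)..1, y ^ (a + 1) = 1 / (a + 2) := by
    rw [integral_rpow (Or.inl (by linarith))]
    rw [Real.one_rpow, Real.zero_rpow (by positivity)]
    norm_num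
    ring_nf
  have key : ∫ y in (0:ℝ)..1, y ^ a * (C + D * y)
      = ∫ y in (0:ℝ)..1, (C * y ^ a + D * y ^ (a + 1)) := by
    apply intervalIntegral.integral_congr
    intro y hy
    simp only [Set.uIcc_of_le (by norm_num : (0:ℝ) ≤ 1)] at hy
    rcases eq_or_lt_of_le hy.1 with h | h
    · simp [← h, Real.zero_rpow ha.ne', Real.zero_rpow (by positivity : a + 1 ≠ 0)]
    · simp only []
      rw [Real.rpow_add_one h.ne']
      ring
  rw [key, intervalIntegral.integral_add, intervalIntegral.integral_const_mul,
    intervalIntegral.integral_const_mul, h1, h2]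
  · ring
  · exact (ContinuousOn.intervalIntegrable (by
      have := (contOn_rpow ha (Set.uIcc (0:ℝ) 1)).const_smul C
      simpa [Pi.smul_def, smul_eq_mul] using this))
  · exact (ContinuousOn.intervalIntegrable (by
      have := (contOn_rpow (by linarith : (0:ℝ) < a + 1) (Set.uIcc (0:ℝ) 1)).const_smul D
      simpa [Pi.smul_def, smul_eq_mul] using this))


lemma Q_eq {a b x : ℝ} (ha : 0 < a) (hx0 : 0 < x) (hx1 : x < 1) :
    Q a b x = (1 - x) ^ (b - 1)
      + (b - 1) * x * ∫ y in (0:ℝ)..1, y ^ a * (1 - x * y) ^ (b - 2) := by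
  set f' : ℝ → ℝ := fun y =>
    a * (y ^ (a - 1) * (1 - x * y) ^ (b - 1))
      - (b - 1) * x * (y ^ a * (1 - x * y) ^ (b - 2)) with hf'
  have hcont : ContinuousOn (fun y : ℝ => y ^ a * (1 - x * y) ^ (b - 1)) (Set.Icc 0 1) :=
    (contOn_rpow ha _).mul (contOn_base hx1 hx0 (b - 1))
  have hderiv : ∀ y ∈ Set.Ioo (0:ℝ) 1,
      HasDerivAt (fun y : ℝ => y ^ a * (1 - x * y) ^ (b - 1)) (f' y) y := by
    intro y hy
    have hpos : 0 < 1 - x * y := by nlinarith [hy.1, hy.2]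
    have h1 : HasDerivAt (fun y : ℝ => y ^ a) (a * y ^ (a - 1)) y :=
      Real.hasDerivAt_rpow_const (Or.inl hy.1.ne')
    have hlin : HasDerivAt (fun y : ℝ => 1 - x * y) (-x) y := by
      simpa using ((hasDerivAt_id y).const_mul x).const_sub 1
    have h2 : HasDerivAt (fun y : ℝ => (1 - x * y) ^ (b - 1))
        (-x * (b - 1) * (1 - x * y) ^ (b - 1 - 1)) y :=
      hlin.rpow_const (Or.inl hpos.ne')
    have hexp : b - 1 - 1 = b - 2 := by ring
    rw [hexp] at h2
    have := h1.fun_mul h2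
    refine this.congr_deriv ?_
    simp only [hf']
    ring
  have hi1 : IntervalIntegrable (fun y : ℝ => y ^ (a - 1)) MeasureTheory.volume 0 1 :=
    intervalIntegral.intervalIntegrable_rpow' (by linarith)
  have hg1 : IntervalIntegrable (fun y : ℝ => y ^ (a - 1) * (1 - x * y) ^ (b - 1))
      MeasureTheory.volume 0 1 := by
    refine hi1.mul_continuousOn ?_
    simpa [Set.uIcc_of_le (by norm_num : (0:ℝ) ≤ 1)] using contOn_base hx1 hx0 (b - 1)
  have hf1 : IntervalIntegrable (fun y : ℝ => a * (y ^ (a - 1) * (1 - x * y) ^ (b - 1)))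
      MeasureTheory.volume 0 1 := hg1.const_mul a
  have hg2cont : ContinuousOn (fun y : ℝ => y ^ a * (1 - x * y) ^ (b - 2)) (Set.Icc 0 1) :=
    (contOn_rpow ha _).mul (contOn_base hx1 hx0 (b - 2))
  have hg2 : IntervalIntegrable (fun y : ℝ => y ^ a * (1 - x * y) ^ (b - 2))
      MeasureTheory.volume 0 1 :=
    ContinuousOn.intervalIntegrable (by
      simpa [Set.uIcc_of_le (by norm_num : (0:ℝ) ≤ 1)] using hg2cont)
  have hf2 : IntervalIntegrable (fun y : ℝ => (b - 1) * x * (y ^ a * (1 - x * y) ^ (b - 2)))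
      MeasureTheory.volume 0 1 := hg2.const_mul ((b - 1) * x)
  have hint : IntervalIntegrable f' MeasureTheory.volume 0 1 := hf1.sub hf2
  have hftc := intervalIntegral.integral_eq_sub_of_hasDerivAt_of_le
    (by norm_num : (0:ℝ) ≤ 1) hcont hderiv hint
  have hF1 : (1:ℝ) ^ a * (1 - x * 1) ^ (b - 1) = (1 - x) ^ (b - 1) := by
    rw [Real.one_rpow]; ring_nf
  have hF0 : (0:ℝ) ^ a * (1 - x * 0) ^ (b - 1) = 0 := by
    rw [Real.zero_rpow ha.ne']; ring
  rw [hF1, hF0, sub_zero] at hftc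
  have hsplit : ∫ y in (0:ℝ)..1, f' y
      = (∫ y in (0:ℝ)..1, a * (y ^ (a - 1) * (1 - x * y) ^ (b - 1)))
        - ∫ y in (0:ℝ)..1, (b - 1) * x * (y ^ a * (1 - x * y) ^ (b - 2)) :=
    intervalIntegral.integral_sub hf1 hf2
  rw [hsplit, intervalIntegral.integral_const_mul, intervalIntegral.integral_const_mul] at hftc
  rw [Q]
  linarith

lemma jensen_aux {a x : ℝ} (ha : 0 < a) (hx0 : 0 < x) (hx1 : x < 1) (p : ℝ) :
    ∫ y in (0:ℝ)..1, y ^ a *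
        (((1 - x * ((a + 1) / (a + 2))) ^ p
            + p * (1 - x * ((a + 1) / (a + 2))) ^ (p - 1) * x * ((a + 1) / (a + 2)))
          + (-(p * (1 - x * ((a + 1) / (a + 2))) ^ (p - 1) * x)) * y)
      = (1 - x * ((a + 1) / (a + 2))) ^ p / (a + 1) := by
  rw [integral_rpow_monomial ha]
  have h2 : (0:ℝ) < a + 2 := by linarith
  have h1 : (0:ℝ) < a + 1 := by linarith
  field_simp
  ring

lemma jensen_bounds {a b x : ℝ} (ha : 0 < a) (hx0 : 0 < x) (hx1 : x < 1) :
    ((b - 2 ≤ 0 ∨ 1 ≤ b - 2) →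
      (1 - x * ((a + 1) / (a + 2))) ^ (b - 2) / (a + 1)
        ≤ ∫ y in (0:ℝ)..1, y ^ a * (1 - x * y) ^ (b - 2)) ∧
    ((0 ≤ b - 2 ∧ b - 2 ≤ 1) →
      (∫ y in (0:ℝ)..1, y ^ a * (1 - x * y) ^ (b - 2))
        ≤ (1 - x * ((a + 1) / (a + 2))) ^ (b - 2) / (a + 1)) := by
  set p := b - 2 with hp
  set m := (a + 1) / (a + 2) with hm
  set v := 1 - x * m with hv
  have h2 : (0:ℝ) < a + 2 := by linarith
  have h1 : (0:ℝ) < a + 1 := by linarith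
  have hm0 : 0 < m := by positivity
  have hm1 : m < 1 := by rw [hm]; rw [div_lt_one h2]; linarith
  have hvpos : 0 < v := by nlinarith
  set C := v ^ p + p * v ^ (p - 1) * x * m with hC
  set D := -(p * v ^ (p - 1) * x) with hD
  have hlin : ∀ y : ℝ, y ^ a * (C + D * y)
      = y ^ a * (v ^ p + p * v ^ (p - 1) * ((1 - x * y) - v)) := by
    intro y
    have : C + D * y = v ^ p + p * v ^ (p - 1) * ((1 - x * y) - v) := by
      rw [hC, hD, hv]; ring
    rw [this]
  have hIlin : ∫ y in (0:ℝ)..1, y ^ a * (C + D * y) = v ^ p / (a + 1) := by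
    rw [hC, hD, hv, hm]
    exact jensen_aux ha hx0 hx1 p
  have hcont1 : ContinuousOn (fun y : ℝ => y ^ a * (C + D * y)) (Set.Icc 0 1) :=
    (contOn_rpow ha _).mul (by fun_prop)
  have hint1 : IntervalIntegrable (fun y : ℝ => y ^ a * (C + D * y))
      MeasureTheory.volume 0 1 :=
    ContinuousOn.intervalIntegrable (by
      simpa [Set.uIcc_of_le (by norm_num : (0:ℝ) ≤ 1)] using hcont1)
  have hcont2 : ContinuousOn (fun y : ℝ => y ^ a * (1 - x * y) ^ p) (Set.Icc 0 1) :=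
    (contOn_rpow ha _).mul (contOn_base hx1 hx0 p)
  have hint2 : IntervalIntegrable (fun y : ℝ => y ^ a * (1 - x * y) ^ p)
      MeasureTheory.volume 0 1 :=
    ContinuousOn.intervalIntegrable (by
      simpa [Set.uIcc_of_le (by norm_num : (0:ℝ) ≤ 1)] using hcont2)
  constructor
  · intro hcase
    have hle : ∀ y ∈ Set.Icc (0:ℝ) 1, y ^ a * (C + D * y) ≤ y ^ a * (1 - x * y) ^ p := by
      intro y hy
      have hu : 0 < 1 - x * y := by nlinarith [hy.1, hy.2]
      have htan := tangent_le hu hvpos hcase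
      have hya : 0 ≤ y ^ a := Real.rpow_nonneg hy.1 a
      rw [hlin y]
      nlinarith [htan]
    have := intervalIntegral.integral_mono_on (by norm_num : (0:ℝ) ≤ 1) hint1 hint2 hle
    rw [hIlin] at this
    exact this
  · intro hcase
    have hle : ∀ y ∈ Set.Icc (0:ℝ) 1, y ^ a * (1 - x * y) ^ p ≤ y ^ a * (C + D * y) := by
      intro y hy
      have hu : 0 < 1 - x * y := by nlinarith [hy.1, hy.2]
      have htan := tangent_ge hu hvpos hcase.1 hcase.2
      have hya : 0 ≤ y ^ a := Real.rpow_nonneg hy.1 a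
      rw [hlin y]
      nlinarith [htan]
    have := intervalIntegral.integral_mono_on (by norm_num : (0:ℝ) ≤ 1) hint2 hint1 hle
    rw [hIlin] at this
    exact this

theorem beta_Q2_bounds (a b : ℝ) (ha : 0 < a) (hb : 0 < b)
    (x : ℝ) (hx : x ∈ Set.Ioo (0:ℝ) 1) :
    ((b ≤ 1 ∨ (2 ≤ b ∧ b ≤ 3)) →
      Q a b x ≤ (1 - x) ^ (b - 1)
        + (b - 1) * x / (a + 1) * (1 - (a + 1) * x / (a + 2)) ^ (b - 2)) ∧
    (((1 ≤ b ∧ b ≤ 2) ∨ 3 ≤ b) →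
      (1 - x) ^ (b - 1)
        + (b - 1) * x / (a + 1) * (1 - (a + 1) * x / (a + 2)) ^ (b - 2) ≤ Q a b x) := by
  obtain ⟨hx0, hx1⟩ := hx
  have h1 : (0:ℝ) < a + 1 := by linarith
  have h2 : (0:ℝ) < a + 2 := by linarith
  have hQ := Q_eq (b := b) ha hx0 hx1
  set I := ∫ y in (0:ℝ)..1, y ^ a * (1 - x * y) ^ (b - 2) with hI
  have hbase : 1 - x * ((a + 1) / (a + 2)) = 1 - (a + 1) * x / (a + 2) := by ring
  set v := 1 - (a + 1) * x / (a + 2) with hvdef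
  have hJ := jensen_bounds (b := b) ha hx0 hx1
  rw [hbase] at hJ
  have hterm : (b - 1) * x / (a + 1) * v ^ (b - 2)
      = (b - 1) * x * (v ^ (b - 2) / (a + 1)) := by ring
  constructor
  · rintro (hb1 | ⟨hb2, hb3⟩)
    · have hIJ := hJ.1 (Or.inl (by linarith))
      have hc : (b - 1) * x ≤ 0 := by nlinarith
      rw [hQ, hterm]
      nlinarith [mul_le_mul_of_nonpos_left hIJ hc]
    · have hIJ := hJ.2 ⟨by linarith, by linarith⟩
      have hc : 0 ≤ (b - 1) * x := by nlinarith
      rw [hQ, hterm]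
      nlinarith [mul_le_mul_of_nonneg_left hIJ hc]
  · rintro (⟨hb1, hb2⟩ | hb3)
    · have hIJ := hJ.1 (Or.inl (by linarith))
      have hc : 0 ≤ (b - 1) * x := by nlinarith
      rw [hQ, hterm]
      nlinarith [mul_le_mul_of_nonneg_left hIJ hc]
    · have hIJ := hJ.1 (Or.inr (by linarith))
      have hc : 0 ≤ (b - 1) * x := by nlinarith
      rw [hQ, hterm]
      nlinarith [mul_le_mul_of_nonneg_left hIJ hc]
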